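/- Let ν ≥ 0 and let w : ℤ × ℝ → ℂ be measurable. Define W(t,k,η) = w(k, η + k·t) · exp(−ν ∫₀ᵗ (k² + (η + k·s)²) ds) and Ψ(t,k,η) = W(t,k,η)/(k² + η²). Then for every t ≥ 0, (1 + t²)² · ∑_{k ≠ 0} ∫_ℝ |Ψ(t,k,η)|² dη ≤ 16 · ∑_{k ≠ 0} ∫_ℝ (1 + η²)² |w(k,η)|² dη (as an inequality of extended nonnegative reals). -/

import Mathlib

open MeasureTheory
open scoped ENNReal NNReal

set_option maxHeartbeats 1000000 in
/-- `L²` inviscid damping for the stream function of the linearized Couette flow: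
`(1 + t²)² ∑_{k ≠ 0} ∫ |Ψ(t,k,η)|² dη ≤ 16 ∑_{k ≠ 0} ∫ (1 + η²)² |w(k,η)|² dη`. -/
theorem stmt_6 (ν : ℝ) (hν : 0 ≤ ν) (w : ℤ × ℝ → ℂ) (hw : Measurable w)
    (W Ψ : ℝ → ℤ → ℝ → ℂ)
    (hW : ∀ (t : ℝ) (k : ℤ) (η : ℝ), W t k η =
      w (k, η + (k : ℝ) * t) *
        (Real.exp (-ν * ∫ s in (0:ℝ)..t, ((k : ℝ) ^ 2 + (η + (k : ℝ) * s) ^ 2)) : ℂ))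
    (hΨ : ∀ (t : ℝ) (k : ℤ) (η : ℝ), Ψ t k η =
      W t k η / (((k : ℝ) ^ 2 + η ^ 2 : ℝ) : ℂ)) :
    ∀ t : ℝ, 0 ≤ t →
      ENNReal.ofReal ((1 + t ^ 2) ^ 2) *
          ∑' k : {k : ℤ // k ≠ 0}, ∫⁻ η : ℝ, (‖Ψ t (k : ℤ) η‖₊ : ℝ≥0∞) ^ 2
        ≤ 16 * ∑' k : {k : ℤ // k ≠ 0},
            ∫⁻ η : ℝ, ENNReal.ofReal ((1 + η ^ 2) ^ 2) * (‖w ((k : ℤ), η)‖₊ : ℝ≥0∞) ^ 2 := by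
  intro t ht
  rw [← ENNReal.tsum_mul_left, ← ENNReal.tsum_mul_left]
  refine ENNReal.tsum_le_tsum fun k => ?_
  obtain ⟨k, hk⟩ := k
  have hcoe : ((⟨k, hk⟩ : {k : ℤ // k ≠ 0}) : ℤ) = k := rfl
  rw [hcoe]
  -- per-frequency estimate
  have hk2 : (1 : ℝ) ≤ (k : ℝ) ^ 2 := by
    have : (1 : ℝ) ≤ |(k : ℝ)| := by
      rw [← Int.cast_abs]
      exact_mod_cast Int.one_le_abs hk
    nlinarith [abs_nonneg (k : ℝ), sq_abs (k : ℝ)]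
  rw [← lintegral_const_mul' _ _ (by simp), ← lintegral_const_mul' _ _ (by simp)]
  calc ∫⁻ η : ℝ, ENNReal.ofReal ((1 + t ^ 2) ^ 2) * (‖Ψ t k η‖₊ : ℝ≥0∞) ^ 2
      ≤ ∫⁻ η : ℝ, (fun x : ℝ =>
          16 * (ENNReal.ofReal ((1 + x ^ 2) ^ 2) * (‖w (k, x)‖₊ : ℝ≥0∞) ^ 2))
            (η + (k : ℝ) * t) := by
        refine lintegral_mono fun η => ?_
        simp only
        set m : ℝ := η + (k : ℝ) * t with hm
        set K : ℝ := (k : ℝ) ^ 2 + η ^ 2 with hKdef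
        have hK : (0 : ℝ) < K := by nlinarith [sq_nonneg η]
        set A : ℝ := ‖w (k, m)‖ with hA
        have hA0 : 0 ≤ A := norm_nonneg _
        set E : ℝ := Real.exp (-ν * ∫ s in (0:ℝ)..t, ((k : ℝ) ^ 2 + (η + (k : ℝ) * s) ^ 2))
          with hE
        have hE0 : 0 < E := Real.exp_pos _
        have hE1 : E ≤ 1 := by
          refine Real.exp_le_one_iff.2 ?_
          have hI : 0 ≤ ∫ s in (0:ℝ)..t, ((k : ℝ) ^ 2 + (η + (k : ℝ) * s) ^ 2) :=
            intervalIntegral.integral_nonneg ht fun s _ => by positivity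
          exact mul_nonpos_of_nonpos_of_nonneg (neg_nonpos.2 hν) hI
        have hnorm : ‖Ψ t k η‖ = A * E / K := by
          rw [hΨ, hW, norm_div, norm_mul, Complex.norm_real, Complex.norm_real,
            Real.norm_eq_abs, Real.norm_eq_abs, abs_of_pos hE0, abs_of_pos hK]
        clear_value K A E
        clear_value m
        -- pass to ENNReal.ofReal form
        have h16 : (16 : ℝ≥0∞) = ENNReal.ofReal 16 := by norm_num
        rw [show ((‖Ψ t k η‖₊ : ℝ≥0∞)) ^ 2 = ENNReal.ofReal (‖Ψ t k η‖ ^ 2) by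
            rw [← enorm_eq_nnnorm, ← ofReal_norm, ← ENNReal.ofReal_pow (norm_nonneg _)],
          show ((‖w (k, m)‖₊ : ℝ≥0∞)) ^ 2 = ENNReal.ofReal (A ^ 2) by
            rw [← enorm_eq_nnnorm, ← ofReal_norm, ← ENNReal.ofReal_pow (norm_nonneg _), ← hA],
          h16, ← ENNReal.ofReal_mul (by positivity), ← ENNReal.ofReal_mul (by positivity),
          ← ENNReal.ofReal_mul (by norm_num)]
        refine ENNReal.ofReal_le_ofReal ?_
        rw [hnorm]
        have h1 : 1 + t ^ 2 ≤ 2 * K * (1 + m ^ 2) := by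
          have hkt : t ^ 2 ≤ (k : ℝ) ^ 2 * t ^ 2 := by nlinarith [sq_nonneg t]
          have hmsq : (k : ℝ) ^ 2 * t ^ 2 = (m - η) ^ 2 := by rw [hm]; ring
          nlinarith [hKdef, hkt, hmsq, mul_nonneg (sub_nonneg.2 hk2) (by positivity : (0:ℝ) ≤ 1 + m ^ 2),
            sq_nonneg (m + η), sq_nonneg (η * m)]
        have h2 : (1 + t ^ 2) ^ 2 ≤ 4 * K ^ 2 * (1 + m ^ 2) ^ 2 := by
          nlinarith [sq_nonneg (1 + t ^ 2), mul_pos hK (by positivity : (0:ℝ) < 1 + m ^ 2)]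
        have hE2 : E ^ 2 ≤ 1 := by nlinarith
        rw [div_pow, mul_div_assoc' _ _ _, div_le_iff₀ (by positivity : (0:ℝ) < K ^ 2)]
        calc (1 + t ^ 2) ^ 2 * (A * E) ^ 2
            ≤ (4 * K ^ 2 * (1 + m ^ 2) ^ 2) * (A * E) ^ 2 := by
              exact mul_le_mul_of_nonneg_right h2 (by positivity)
          _ = (4 * K ^ 2 * (1 + m ^ 2) ^ 2 * A ^ 2) * E ^ 2 := by ring
          _ ≤ (4 * K ^ 2 * (1 + m ^ 2) ^ 2 * A ^ 2) * 1 := by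
              exact mul_le_mul_of_nonneg_left hE2 (by positivity)
          _ = 4 * (K ^ 2 * (1 + m ^ 2) ^ 2 * A ^ 2) := by ring
          _ ≤ 16 * (K ^ 2 * (1 + m ^ 2) ^ 2 * A ^ 2) := by
              have hX : (0:ℝ) ≤ K ^ 2 * (1 + m ^ 2) ^ 2 * A ^ 2 := by positivity
              linarith
          _ = 16 * ((1 + m ^ 2) ^ 2 * A ^ 2) * K ^ 2 := by ring
    _ = ∫⁻ η : ℝ, 16 * (ENNReal.ofReal ((1 + η ^ 2) ^ 2) * (‖w (k, η)‖₊ : ℝ≥0∞) ^ 2) :=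
        lintegral_add_right_eq_self
          (fun x : ℝ => 16 * (ENNReal.ofReal ((1 + x ^ 2) ^ 2) * (‖w (k, x)‖₊ : ℝ≥0∞) ^ 2))
          ((k : ℝ) * t)
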